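/- Let H and K be real Hilbert spaces and T : H →L[ℝ] K a bounded linear operator with ‖T‖ ≤ 1. Let β > 0, w₀ ∈ H, and let h₀ = (T*T)^{β/2} w₀, where the fractional power of the nonnegative selfadjoint operator T*T is defined via the continuous functional calculus. For λ > 0 let h* = (T*T + λ·id)⁻¹ (T*T h₀) be the Tikhonov-regularized solution. Then ‖T(h* − h₀)‖² ≤ ‖w₀‖² · λ^{min(β + 1, 2)}. -/

import Mathlib

open ContinuousLinearMap

set_option maxHeartbeats 1000000

/-- Weak-metric Tikhonov regularization bias bound under the β-source condition:
if `‖T‖ ≤ 1`, `h₀ = (T*T)^(β/2) w₀` (fractional power via the continuous functional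
calculus) and `h*` is the Tikhonov solution, i.e. `(T*T + λ·id) h* = T*T h₀`, then
`‖T(h* − h₀)‖² ≤ ‖w₀‖² λ^(min (β+1) 2)`. -/
theorem tikhonov_bias_weak_metric
    {H K : Type*} [NormedAddCommGroup H] [InnerProductSpace ℝ H] [CompleteSpace H]
    [NormedAddCommGroup K] [InnerProductSpace ℝ K] [CompleteSpace K]
    [ContinuousFunctionalCalculus ℝ (H →L[ℝ] H) (IsSelfAdjoint : (H →L[ℝ] H) → Prop)]
    (T : H →L[ℝ] K) (hT : ‖T‖ ≤ 1)
    (β : ℝ) (hβ : 0 < β) (w₀ h₀ : H)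
    (hsource : h₀ = cfc (fun x : ℝ => x ^ (β / 2)) (adjoint T ∘L T) w₀)
    (lam : ℝ) (hlam : 0 < lam) (hstar : H)
    (hstar_eq : (adjoint T ∘L T + lam • ContinuousLinearMap.id ℝ H) hstar
      = (adjoint T ∘L T) h₀) :
    ‖T (hstar - h₀)‖ ^ 2 ≤ ‖w₀‖ ^ 2 * lam ^ min (β + 1) 2 := by
  set A : H →L[ℝ] H := adjoint T ∘L T with hA_def
  have hApos : A.IsPositive := by
    have := isPositive_one.adjoint_conj (T := (1 : K →L[ℝ] K)) T
    simpa [one_def] using this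
  have hA : IsSelfAdjoint A := hApos.isSelfAdjoint
  -- spectrum of A is in [0,1]
  have hspec : spectrum ℝ A ⊆ Set.Icc 0 1 := by
    intro x hx
    refine ⟨(SpectrumRestricts.nnreal_iff.mp hApos.spectrumRestricts) x hx, ?_⟩
    have h1 : ‖x‖ ≤ ‖A‖ * ‖(1 : H →L[ℝ] H)‖ := spectrum.norm_le_norm_mul_of_mem hx
    have h2 : ‖A‖ ≤ 1 := by
      rw [hA_def, norm_adjoint_comp_self]
      exact mul_le_one₀ hT (norm_nonneg T) hT
    have h3 : ‖(1 : H →L[ℝ] H)‖ ≤ 1 := norm_id_le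
    calc x ≤ ‖x‖ := le_abs_self x
    _ ≤ ‖A‖ * ‖(1 : H →L[ℝ] H)‖ := h1
    _ ≤ 1 * 1 := by
        exact mul_le_mul h2 h3 (norm_nonneg _) (by linarith [norm_nonneg A])
    _ = 1 := one_mul 1
  have hpos : ∀ x ∈ spectrum ℝ A, 0 < x + lam := fun x hx =>
    add_pos_of_nonneg_of_pos (hspec hx).1 hlam
  -- ⟪A z, z⟫ = ‖T z‖²
  have hTz : ∀ z : H, inner ℝ (A z) z = ‖T z‖ ^ 2 := fun z => by
    rw [hA_def, comp_apply, adjoint_inner_left, real_inner_self_eq_norm_sq]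
  -- continuity helper
  have hrp : ∀ e : ℝ, 0 < e → ContinuousOn (fun x : ℝ => x ^ e) (spectrum ℝ A) :=
    fun e he => fun x _ =>
      (Real.continuousAt_rpow_const x e (Or.inr he.le)).continuousWithinAt
  have hcont : ∀ e : ℝ, 0 < e →
      ContinuousOn (fun x : ℝ => lam * x ^ e / (x + lam)) (spectrum ℝ A) := by
    intro e he
    exact (continuousOn_const.mul (hrp e he)).div
      ((continuous_id.add continuous_const).continuousOn) (fun x hx => (hpos x hx).ne')
  set g : ℝ → ℝ := fun x => lam * x ^ (β / 2) / (x + lam) with hg_def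
  have hgc : ContinuousOn g (spectrum ℝ A) := hcont _ (by linarith)
  set q : ℝ → ℝ := fun x => lam * x ^ ((β + 1) / 2) / (x + lam) with hq_def
  have hqc : ContinuousOn q (spectrum ℝ A) := hcont _ (by linarith)
  -- injectivity of A + lam • 1
  have hone : lam • ContinuousLinearMap.id ℝ H = lam • (1 : H →L[ℝ] H) := rfl
  have hinj : ∀ y : H, (A + lam • (1 : H →L[ℝ] H)) y = 0 → y = 0 := by
    intro y hy
    have h0 : (0 : ℝ) = inner ℝ ((A + lam • (1 : H →L[ℝ] H)) y) y := by rw [hy, inner_zero_left]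
    rw [add_apply, inner_add_left, hTz, smul_apply, one_apply_eq_self, real_inner_smul_left,
      real_inner_self_eq_norm_sq] at h0
    have h1 : lam * ‖y‖ ^ 2 ≤ 0 := by nlinarith [sq_nonneg (‖T y‖)]
    have h2 : ‖y‖ ^ 2 ≤ 0 := by nlinarith
    have hy0 : ‖y‖ = 0 := by
      have := sq_nonneg ‖y‖
      nlinarith [norm_nonneg y]
    simpa using hy0
  -- (A + lam) (cfc g A w₀) = lam • h₀
  have hkey1 : (A + lam • (1 : H →L[ℝ] H)) * cfc g A = lam • cfc (fun x : ℝ => x ^ (β / 2)) A := by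
    have e1 : A + lam • (1 : H →L[ℝ] H) = cfc (fun x : ℝ => x + lam) A := by
      rw [cfc_add_const lam (fun x : ℝ => x) A continuousOn_id hA, cfc_id' ℝ A hA,
        Algebra.algebraMap_eq_smul_one]
    rw [e1, ← cfc_mul (fun x : ℝ => x + lam) g A
      ((continuous_id.add continuous_const).continuousOn) hgc]
    rw [← cfc_const_mul lam (fun x : ℝ => x ^ (β / 2)) A (hrp _ (by linarith))]
    apply cfc_congr
    intro x hx
    have hxl : x + lam ≠ 0 := (hpos x hx).ne'
    simp only [hg_def]
    field_simp
  have hz : hstar - h₀ = -(cfc g A w₀) := by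
    have h1 : (A + lam • (1 : H →L[ℝ] H)) (hstar - h₀) = -(lam • h₀) := by
      rw [map_sub]
      rw [hone] at hstar_eq
      rw [hstar_eq]
      simp only [add_apply, smul_apply, one_apply]
      abel
    have h2 : (A + lam • (1 : H →L[ℝ] H)) (cfc g A w₀) = lam • h₀ := by
      have h4 := congrArg (fun S : H →L[ℝ] H => S w₀) hkey1
      simp only [mul_apply_eq_comp, smul_apply] at h4
      rw [h4, hsource]
    have h3 := hinj ((hstar - h₀) + cfc g A w₀)
      (by rw [map_add, h1, h2, neg_add_cancel])
    exact eq_neg_of_add_eq_zero_left h3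
  -- the constant
  set c : ℝ := lam ^ min (β + 1) 2 with hc_def
  have hc0 : 0 ≤ c := Real.rpow_nonneg hlam.le _
  -- pointwise bound : q x * q x ≤ c on the spectrum
  have hbound : ∀ x ∈ spectrum ℝ A, q x * q x ≤ c := by
    intro x hx
    obtain ⟨hx0, hx1⟩ := hspec hx
    have hxl : (0 : ℝ) < x + lam := hpos x hx
    have h3 : x ^ ((β + 1) / 2) * x ^ ((β + 1) / 2) = x ^ (β + 1) := by
      rw [← Real.rpow_add' hx0 (by intro h; linarith)]
      congr 1
      ring
    have hq2 : q x * q x = lam * lam * x ^ (β + 1) / ((x + lam) * (x + lam)) := by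
      simp only [hq_def]
      rw [div_mul_div_comm,
        show lam * x ^ ((β + 1) / 2) * (lam * x ^ ((β + 1) / 2))
          = lam * lam * (x ^ ((β + 1) / 2) * x ^ ((β + 1) / 2)) by ring, h3]
    rw [hq2, div_le_iff₀ (by positivity)]
    rcases le_total 2 (β + 1) with hb | hb
    · rw [hc_def, min_eq_right hb, Real.rpow_two]
      have e4 : x ^ (β + 1) ≤ x * x := by
        rcases eq_or_lt_of_le hx0 with h | h
        · rw [← h, Real.zero_rpow (by linarith)]; simp
        · have h5 := Real.rpow_le_rpow_of_exponent_ge h hx1 hb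
          rwa [Real.rpow_two, pow_two] at h5
      have e5 : x * x ≤ (x + lam) * (x + lam) := by nlinarith
      nlinarith [mul_le_mul_of_nonneg_left e4 (mul_pos hlam hlam).le,
        mul_le_mul_of_nonneg_left e5 (mul_pos hlam hlam).le]
    · rw [hc_def, min_eq_left hb]
      have e6 : lam * lam = lam ^ (β + 1) * lam ^ (1 - β) := by
        rw [← Real.rpow_add hlam, show β + 1 + (1 - β) = 2 by ring, Real.rpow_two, pow_two]
      have e7 : x ^ (β + 1) ≤ (x + lam) ^ (β + 1) :=
        Real.rpow_le_rpow hx0 (by linarith) (by linarith)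
      have e8 : lam ^ (1 - β) ≤ (x + lam) ^ (1 - β) :=
        Real.rpow_le_rpow hlam.le (by linarith) (by linarith)
      have e9 : (x + lam) ^ (β + 1) * (x + lam) ^ (1 - β) = (x + lam) * (x + lam) := by
        rw [← Real.rpow_add hxl, show β + 1 + (1 - β) = 2 by ring, Real.rpow_two, pow_two]
      calc lam * lam * x ^ (β + 1) = lam ^ (β + 1) * (lam ^ (1 - β) * x ^ (β + 1)) := by
            rw [e6]; ring
        _ ≤ lam ^ (β + 1) * ((x + lam) ^ (1 - β) * (x + lam) ^ (β + 1)) := by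
            have h10 := mul_le_mul e8 e7 (Real.rpow_nonneg hx0 _)
              (Real.rpow_nonneg (by linarith) _)
            exact mul_le_mul_of_nonneg_left h10 (Real.rpow_nonneg hlam.le _)
        _ = lam ^ (β + 1) * ((x + lam) * (x + lam)) := by rw [mul_comm ((x+lam) ^ (1-β)) _, e9]
    -- operator identities
  have hS : IsSelfAdjoint (cfc g A) := cfc_predicate g A
  have hP : IsSelfAdjoint (cfc q A) := cfc_predicate q A
  have hAS : A * cfc g A = cfc (fun x : ℝ => x * g x) A := by
    have h6 := cfc_mul (fun x : ℝ => x) g A continuous_id'.continuousOn hgc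
    rw [cfc_id' ℝ A hA] at h6
    exact h6.symm
  have hSAS : cfc g A * cfc (fun x : ℝ => x * g x) A = cfc q A * cfc q A := by
    rw [← cfc_mul g (fun x : ℝ => x * g x) A hgc (continuous_id'.continuousOn.mul hgc),
      ← cfc_mul q q A hqc hqc]
    apply cfc_congr
    intro x hx
    obtain ⟨hx0, _⟩ := hspec hx
    have h3 : x ^ ((β + 1) / 2) * x ^ ((β + 1) / 2) = x ^ (β + 1) := by
      rw [← Real.rpow_add' hx0 (by intro h; linarith)]
      congr 1
      ring
    have h3b : x ^ (β / 2) * x ^ (β / 2) = x ^ β := by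
      rw [← Real.rpow_add' hx0 (by intro h; linarith)]
      congr 1
      ring
    have h4 : x ^ (β / 2) * (x * x ^ (β / 2)) = x ^ (β + 1) := by
      rw [show x ^ (β / 2) * (x * x ^ (β / 2)) = x ^ (β / 2) * x ^ (β / 2) * x by ring, h3b,
        ← Real.rpow_add_one' hx0 (by intro h; linarith)]
    have hxl : x + lam ≠ 0 := (hpos x hx).ne'
    simp only [hg_def, hq_def]
    linear_combination (lam * lam / (x + lam) / (x + lam)) * (h4 - h3)
  -- square root remainder operator
  set r : ℝ → ℝ := fun x => Real.sqrt (c - q x * q x) with hr_def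
  have hrc : ContinuousOn r (spectrum ℝ A) :=
    Real.continuous_sqrt.comp_continuousOn (continuousOn_const.sub (hqc.mul hqc))
  have hR : IsSelfAdjoint (cfc r A) := cfc_predicate r A
  have hRR : cfc r A * cfc r A = cfc (fun x : ℝ => c - q x * q x) A := by
    rw [← cfc_mul r r A hrc hrc]
    exact cfc_congr fun x hx => Real.mul_self_sqrt (by linarith [hbound x hx])
  have hQQ : cfc q A * cfc q A = cfc (fun x : ℝ => q x * q x) A :=
    (cfc_mul q q A hqc hqc).symm
  have hsum : cfc (fun x : ℝ => q x * q x) A + cfc (fun x : ℝ => c - q x * q x) A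
      = algebraMap ℝ (H →L[ℝ] H) c := by
    rw [← cfc_add A (fun x : ℝ => q x * q x) (fun x : ℝ => c - q x * q x) (hqc.mul hqc)
      (continuousOn_const.sub (hqc.mul hqc))]
    rw [cfc_congr (g := fun _ : ℝ => c) (fun x _ => by ring)]
    exact cfc_const c A hA
  -- rewrite the quantity as ‖cfc q A w₀‖²
  have m1 : ‖T (hstar - h₀)‖ ^ 2 = inner ℝ (A (cfc g A w₀)) (cfc g A w₀) := by
    rw [hz, map_neg, norm_neg, ← hTz]
  have minner : ∀ (P : H →L[ℝ] H), IsSelfAdjoint P →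
      (inner ℝ ((P * P) w₀) w₀ : ℝ) = ‖P w₀‖ ^ 2 := by
    intro P hPsa
    rw [mul_apply_eq_comp, ← hPsa.adjoint_eq, adjoint_inner_left, hPsa.adjoint_eq,
      real_inner_self_eq_norm_sq]
  have m2 : (inner ℝ (A (cfc g A w₀)) (cfc g A w₀) : ℝ) = ‖cfc q A w₀‖ ^ 2 := by
    have s1 : A (cfc g A w₀) = cfc (fun x : ℝ => x * g x) A w₀ := by
      have h7 := congrArg (fun S : H →L[ℝ] H => S w₀) hAS
      simpa only [mul_apply_eq_comp] using h7
    rw [s1, ← adjoint_inner_left (cfc g A), hS.adjoint_eq]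
    have s2 : cfc g A (cfc (fun x : ℝ => x * g x) A w₀) = (cfc q A * cfc q A) w₀ := by
      have h8 := congrArg (fun S : H →L[ℝ] H => S w₀) hSAS
      simpa only [mul_apply_eq_comp] using h8
    rw [s2, minner _ hP]
  -- add the remainder and conclude
  have m6 : ‖cfc q A w₀‖ ^ 2 + ‖cfc r A w₀‖ ^ 2 = c * ‖w₀‖ ^ 2 := by
    have h9 := congrArg (fun S : H →L[ℝ] H => (inner ℝ (S w₀) w₀ : ℝ)) hsum
    simp only [add_apply, inner_add_left] at h9
    rw [← hQQ, ← hRR, minner _ hP, minner _ hR] at h9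
    rw [h9, Algebra.algebraMap_eq_smul_one]
    simp only [smul_apply, one_apply_eq_self, real_inner_smul_left, real_inner_self_eq_norm_sq]
  rw [m1, m2, mul_comm (‖w₀‖ ^ 2) c]
  nlinarith [sq_nonneg ‖cfc r A w₀‖]
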